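/- Fix integers n_x, n_y ≥ 1 and let S = ZMod n_x × ZMod n_y with shifts x̂ = (1,0) and ŷ = (0,1). Let θ : S → ℝ. Then there exist functions τˣ, τʸ : S → ℝ satisfying τˣ_k + τʸ_{k+x̂} − τˣ_{k+ŷ} − τʸ_k = θ_k for all k ∈ S if and only if Σ_{k ∈ S} θ_k = 0. -/

import Mathlib

private lemma sum_shift {G : Type*} [AddGroup G] [Fintype G] (f : G → ℝ) (c : G) :
    ∑ k, f (k + c) = ∑ k, f k :=
  Fintype.sum_equiv (Equiv.addRight c) _ _ (fun _ => rfl)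

private lemma val_add_one {n : ℕ} [NeZero n] (a : ZMod n) :
    (a + 1).val = (a.val + 1) % n := by
  rw [ZMod.val_add]
  have h1 : (1 : ZMod n).val = 1 % n := by rw [← Nat.cast_one, ZMod.val_natCast]
  rw [h1]
  rcases Nat.lt_or_ge 1 n with hn | hn
  · rw [Nat.mod_eq_of_lt hn]
  · interval_cases n
    · exact absurd rfl (NeZero.ne 0)
    · simp [Nat.mod_one]

private lemma partial_step {n : ℕ} [NeZero n] (h : ZMod n → ℝ)
    (hs : ∑ a : ZMod n, h a = 0) (a : ZMod n) :
    (∑ m ∈ Finset.range (a + 1).val, h (m : ZMod n))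
      - ∑ m ∈ Finset.range a.val, h (m : ZMod n) = h a := by
  have hlt : a.val < n := a.val_lt
  have hv : (a + 1).val = (a.val + 1) % n := val_add_one a
  have hsum_range : ∑ m ∈ Finset.range n, h (m : ZMod n) = 0 := by
    rw [← hs]
    refine Finset.sum_nbij' (fun m => (m : ZMod n)) (fun b => b.val)
      (fun _ _ => Finset.mem_univ _) (fun b _ => Finset.mem_range.mpr b.val_lt)
      ?_ (fun b _ => ZMod.natCast_zmod_val b) (fun _ _ => rfl)
    intro m hm
    exact ZMod.val_cast_of_lt (Finset.mem_range.mp hm)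
  by_cases hc : a.val + 1 = n
  · have h0 : (a + 1).val = 0 := by rw [hv, hc, Nat.mod_self]
    have hsucc : ∑ m ∈ Finset.range (a.val + 1), h (m : ZMod n)
        = (∑ m ∈ Finset.range a.val, h (m : ZMod n)) + h a := by
      rw [Finset.sum_range_succ, ZMod.natCast_zmod_val]
    rw [hc] at hsucc
    rw [h0]
    simp only [Finset.range_zero, Finset.sum_empty]
    linarith
  · have h1 : (a + 1).val = a.val + 1 := by
      rw [hv, Nat.mod_eq_of_lt (lt_of_le_of_ne (by omega) hc)]
    rw [h1, Finset.sum_range_succ, ZMod.natCast_zmod_val]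
    ring

/-- Solvability of the discrete-curl equation on a periodic two-dimensional lattice: a
family of plaquette angles `θ : S → ℝ` arises as the discrete curl
`τˣ_k + τʸ_{k+x̂} − τˣ_{k+ŷ} − τʸ_k` of link angles `(τˣ, τʸ)` if and only if
`Σ_{k ∈ S} θ_k = 0`. -/
theorem discrete_curl_solvable_iff_sum_zero (nx ny : ℕ) [NeZero nx] [NeZero ny]
    (θ : ZMod nx × ZMod ny → ℝ) :
    (∃ τx τy : ZMod nx × ZMod ny → ℝ,
        ∀ k : ZMod nx × ZMod ny,
          τx k + τy (k + (1, 0)) - τx (k + (0, 1)) - τy k = θ k) ↔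
      ∑ k : ZMod nx × ZMod ny, θ k = 0 := by
  constructor
  · rintro ⟨τx, τy, hτ⟩
    calc ∑ k : ZMod nx × ZMod ny, θ k
        = ∑ k : ZMod nx × ZMod ny,
            (τx k + τy (k + (1, 0)) - τx (k + (0, 1)) - τy k) :=
          Finset.sum_congr rfl (fun k _ => (hτ k).symm)
      _ = 0 := by
          simp only [Finset.sum_sub_distrib, Finset.sum_add_distrib,
            sum_shift τy (1, 0), sum_shift τx (0, 1)]
          ring
  · intro hsum
    set c : ZMod nx → ℝ := fun i => ∑ j : ZMod ny, θ (i, j) with hcdef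
    have hc : ∑ i : ZMod nx, c i = 0 := by
      rw [← hsum, Fintype.sum_prod_type]
    set g : ZMod nx → ℝ :=
      fun i => (ny : ℝ)⁻¹ * ∑ m ∈ Finset.range i.val, c (m : ZMod nx) with hgdef
    have hny : (ny : ℝ) ≠ 0 := Nat.cast_ne_zero.mpr (NeZero.ne ny)
    have hg : ∀ i : ZMod nx, g (i + 1) - g i = (ny : ℝ)⁻¹ * c i := by
      intro i
      rw [hgdef]
      simp only
      rw [← mul_sub, partial_step c hc i]
    set θ' : ZMod nx → ZMod ny → ℝ :=
      fun i j => θ (i, j) - (g (i + 1) - g i) with hθ'def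
    have hθ'sum : ∀ i : ZMod nx, ∑ j : ZMod ny, θ' i j = 0 := by
      intro i
      simp only [hθ'def, Finset.sum_sub_distrib, Finset.sum_const, Finset.card_univ,
        ZMod.card, nsmul_eq_mul, hg i]
      field_simp
      simp [hcdef]
    refine ⟨fun k => -∑ m ∈ Finset.range k.2.val, θ' k.1 (m : ZMod ny),
      fun k => g k.1, fun k => ?_⟩
    obtain ⟨i, j⟩ := k
    have hstep := partial_step (θ' i) (hθ'sum i) j
    have h1 : (i, j) + ((1 : ZMod nx), (0 : ZMod ny)) = (i + 1, j) := by
      simp [Prod.ext_iff]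
    have h2 : (i, j) + ((0 : ZMod nx), (1 : ZMod ny)) = (i, j + 1) := by
      simp [Prod.ext_iff]
    rw [h1, h2]
    simp only
    have : θ' i j = θ (i, j) - (g (i + 1) - g i) := rfl
    linarith [hstep, this]
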